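/- In a Euclidean Hurwitz algebra of dimension 2, if i denotes a unit vector orthogonal to the unit element 1, then for all real α, β, γ, δ: (α·1 + β·i)·(γ·1 + δ·i) = (αγ - βδ)·1 + (αδ + βγ)·i. In particular, the multiplication coincides with complex multiplication and is commutative. -/

import Mathlib

theorem stmt_14 {A : Type*} [NormedAddCommGroup A] [InnerProductSpace ℝ A]
    (mul : A →ₗ[ℝ] A →ₗ[ℝ] A) (e : A) (he : ‖e‖ = 1)
    (hul : ∀ x, mul e x = x) (hur : ∀ x, mul x e = x)
    (hmon : ∀ x y, ‖mul x y‖ = ‖x‖ * ‖y‖)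
    (hdim : Module.finrank ℝ A = 2)
    (i : A) (hi : ‖i‖ = 1) (hie : (inner ℝ i e : ℝ) = 0) :
    (∀ α β γ δ : ℝ,
      mul (α • e + β • i) (γ • e + δ • i)
        = (α * γ - β * δ) • e + (α * δ + β * γ) • i) ∧
    (∀ x y : A, mul x y = mul y x) := by
  have hee : (inner ℝ e e : ℝ) = 1 := by
    rw [real_inner_self_eq_norm_mul_norm, he]; ring
  have hii : (inner ℝ i i : ℝ) = 1 := by
    rw [real_inner_self_eq_norm_mul_norm, hi]; ring
  have hei : (inner ℝ e i : ℝ) = 0 := by rw [real_inner_comm]; exact hie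
  -- first-slot polarization
  have key : ∀ x z y : A, (inner ℝ (mul x y) (mul z y) : ℝ) = inner ℝ x z * inner ℝ y y := by
    intro x z y
    have h1 : (inner ℝ (mul x y) (mul x y) : ℝ) = inner ℝ x x * inner ℝ y y := by
      rw [real_inner_self_eq_norm_mul_norm, hmon, real_inner_self_eq_norm_mul_norm,
        real_inner_self_eq_norm_mul_norm]; ring
    have h2 : (inner ℝ (mul z y) (mul z y) : ℝ) = inner ℝ z z * inner ℝ y y := by
      rw [real_inner_self_eq_norm_mul_norm, hmon, real_inner_self_eq_norm_mul_norm,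
        real_inner_self_eq_norm_mul_norm]; ring
    have h3 : (inner ℝ (mul (x + z) y) (mul (x + z) y) : ℝ)
        = inner ℝ (x + z) (x + z) * inner ℝ y y := by
      rw [real_inner_self_eq_norm_mul_norm, hmon, real_inner_self_eq_norm_mul_norm,
        real_inner_self_eq_norm_mul_norm]; ring
    have hadd : mul (x + z) y = mul x y + mul z y := by simp
    rw [hadd, real_inner_add_add_self, real_inner_add_add_self] at h3
    nlinarith [h3, h1, h2]
  -- exchange identity
  have key3 : ∀ x z y w : A, (inner ℝ (mul x y) (mul z w) : ℝ)
      + inner ℝ (mul x w) (mul z y) = 2 * inner ℝ x z * inner ℝ y w := by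
    intro x z y w
    have h := key x z (y + w)
    have hx : mul x (y + w) = mul x y + mul x w := by simp
    have hz : mul z (y + w) = mul z y + mul z w := by simp
    rw [hx, hz, real_inner_add_add_self] at h
    simp only [inner_add_left, inner_add_right] at h
    have h1 := key x z y
    have h2 := key x z w
    nlinarith [h, h1, h2]
  have h0 : (inner ℝ (mul i i) i : ℝ) = 0 := by
    have := key i e i
    rw [hul, hie] at this
    simpa using this
  have hm1 : (inner ℝ (mul i i) e : ℝ) = -1 := by
    have := key3 i e i e
    rw [hul, hur, hul, hie, hii] at this
    linarith
  -- orthonormal basis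
  have horth : Orthonormal ℝ ![e, i] := by
    rw [orthonormal_iff_ite]
    intro a b
    fin_cases a <;> fin_cases b <;>
      simp [hee, hii, hei, hie, he, hi]
  have hcard : Fintype.card (Fin 2) = Module.finrank ℝ A := by simp [hdim]
  have hspan : ⊤ ≤ Submodule.span ℝ (Set.range ![e, i]) := by
    have hb := (basisOfOrthonormalOfCardEqFinrank horth hcard).span_eq
    rw [coe_basisOfOrthonormalOfCardEqFinrank] at hb
    exact hb.ge
  set ob : OrthonormalBasis (Fin 2) ℝ A := OrthonormalBasis.mk horth hspan with hob
  have hdec : ∀ z : A, (inner ℝ e z : ℝ) • e + (inner ℝ i z : ℝ) • i = z := by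
    intro z
    have := ob.sum_repr' z
    simpa [hob, Fin.sum_univ_two, OrthonormalBasis.coe_mk] using this
  have hmulii : mul i i = -e := by
    have := hdec (mul i i)
    have a1 : (inner ℝ e (mul i i) : ℝ) = -1 := by rw [real_inner_comm]; exact hm1
    have a2 : (inner ℝ i (mul i i) : ℝ) = 0 := by rw [real_inner_comm]; exact h0
    rw [a1, a2] at this
    rw [← this]
    simp
  have hmain : ∀ α β γ δ : ℝ,
      mul (α • e + β • i) (γ • e + δ • i)
        = (α * γ - β * δ) • e + (α * δ + β * γ) • i := by
    intro α β γ δ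
    simp only [map_add, map_smul, LinearMap.add_apply, LinearMap.smul_apply,
      hul, hur, hmulii, smul_neg, smul_smul]
    module
  refine ⟨hmain, fun x y => ?_⟩
  rw [← hdec x, ← hdec y, hmain, hmain]
  have h1 : (inner ℝ e x : ℝ) * inner ℝ e y - inner ℝ i x * inner ℝ i y
      = inner ℝ e y * inner ℝ e x - inner ℝ i y * inner ℝ i x := by ring
  have h2 : (inner ℝ e x : ℝ) * inner ℝ i y + inner ℝ i x * inner ℝ e y
      = inner ℝ e y * inner ℝ i x + inner ℝ i y * inner ℝ e x := by ring
  rw [h1, h2]
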